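/- Let n ≥ 1 be an integer, q ∈ ℂ with q ≠ 0 and q² ≠ 1, η_1,…,η_n ∈ ℂ∖{0}, and α_1,…,α_n nonnegative integers such that the numbers q^{−2α_a}η_a² (a = 1,…,n) are pairwise distinct. Then, with [m] := (q^m − q^{−m})/(q − q^{−1}), one has Σ_{a=1}^{n} [α_a] · ∏_{i≠a} (q^{α_a}η_i/η_a − η_a/(q^{α_a}η_i)) / (q^{α_a−α_i}η_i/η_a − η_a/(q^{α_a−α_i}η_i)) = [Σ_{a=1}^{n} α_a], all the denominators being nonzero. -/

import Mathlib

namespace SG14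

open Finset Polynomial

private lemma coeff_card_sub_one {ι : Type*} [DecidableEq ι] (s : Finset ι) (v : ι → ℂ)
    (hvs : Set.InjOn v s) (P : ℂ[X]) (hdeg : P.degree < #s) :
    P.coeff (#s - 1) = ∑ i ∈ s, P.eval (v i) * Lagrange.nodalWeight s v i := by
  conv_lhs => rw [Lagrange.eq_interpolate hvs hdeg]
  rw [Lagrange.interpolate_apply, finset_sum_coeff]
  refine Finset.sum_congr rfl fun i hi => ?_
  rw [coeff_C_mul]
  congr 1
  have hdeg_b : (Lagrange.basis s v i).natDegree = #s - 1 := Lagrange.natDegree_basis hvs hi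
  rw [← hdeg_b, ← Polynomial.leadingCoeff]
  unfold Lagrange.basis Lagrange.nodalWeight
  rw [leadingCoeff_prod]
  refine Finset.prod_congr rfl fun j hj => ?_
  unfold Lagrange.basisDivisor
  rw [leadingCoeff_mul, leadingCoeff_C, (monic_X_sub_C (v j)).leadingCoeff, mul_one]

private lemma prod_erase_none {n : ℕ} (f : Option (Fin n) → ℂ) :
    ∏ j ∈ (univ : Finset (Option (Fin n))).erase none, f j = ∏ b, f (some b) := by
  have h : (univ : Finset (Option (Fin n))).erase none
      = Finset.univ.map Function.Embedding.some := by
    ext x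
    cases x <;> simp
  rw [h, Finset.prod_map]
  rfl

private lemma prod_erase_some {n : ℕ} (f : Option (Fin n) → ℂ) (a : Fin n) :
    ∏ j ∈ (univ : Finset (Option (Fin n))).erase (some a), f j
      = f none * ∏ b ∈ univ.erase a, f (some b) := by
  have h : (univ : Finset (Option (Fin n))).erase (some a)
      = insert none ((univ.erase a).map Function.Embedding.some) := by
    ext x
    cases x <;> simp [eq_comm]
  rw [h, Finset.prod_insert (by simp), Finset.prod_map]
  rfl

private lemma key (n : ℕ) (t z : Fin n → ℂ) (ht0 : ∀ a, t a ≠ 0)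
    (hinj : Function.Injective t) :
    ∑ a, (∏ i, (t a - z i)) * (t a)⁻¹ * ∏ j ∈ univ.erase a, (t a - t j)⁻¹
      = 1 - ∏ i, z i * (t i)⁻¹ := by
  set v : Option (Fin n) → ℂ := fun o => o.elim 0 t with hv
  have hvinj : Set.InjOn v (univ : Finset (Option (Fin n))) := by
    rintro (_ | x) _ (_ | y) _ h
    · rfl
    · exact absurd h.symm (ht0 y)
    · exact absurd h (ht0 x)
    · exact congrArg some (hinj h)
  have hcard : #(univ : Finset (Option (Fin n))) = n + 1 := by simp
  have hP := coeff_card_sub_one univ v hvinj (Lagrange.nodal univ z)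
    (by rw [Lagrange.degree_nodal]; simp; exact_mod_cast Nat.lt_succ_self n)
  rw [hcard] at hP
  simp only [Nat.add_sub_cancel] at hP
  have hlhs : (Lagrange.nodal univ z).coeff n = 1 := by
    have := Lagrange.nodal_monic (s := (univ : Finset (Fin n))) (v := z)
    have hd : (Lagrange.nodal (univ : Finset (Fin n)) z).natDegree = n := by
      rw [Lagrange.natDegree_nodal, card_univ, Fintype.card_fin]
    have h2 := this.coeff_natDegree
    rwa [hd] at h2
  rw [hlhs, Fintype.sum_option] at hP
  unfold Lagrange.nodalWeight at hP
  rw [prod_erase_none] at hP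
  have hnone : (Lagrange.nodal univ z).eval (v none) * ∏ b, (v none - v (some b))⁻¹
      = ∏ i, z i * (t i)⁻¹ := by
    rw [Lagrange.eval_nodal, ← Finset.prod_mul_distrib]
    refine Finset.prod_congr rfl fun i _ => ?_
    show (0 - z i) * (0 - t i)⁻¹ = z i * (t i)⁻¹
    rw [zero_sub, zero_sub, inv_neg]
    ring
  rw [hnone] at hP
  have hsome : ∀ a : Fin n,
      (Lagrange.nodal univ z).eval (v (some a)) * ∏ j ∈ univ.erase (some a), (v (some a) - v j)⁻¹
        = (∏ i, (t a - z i)) * (t a)⁻¹ * ∏ j ∈ univ.erase a, (t a - t j)⁻¹ := by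
    intro a
    rw [prod_erase_some, Lagrange.eval_nodal]
    show (∏ i, (t a - z i)) * ((t a - 0)⁻¹ * ∏ b ∈ univ.erase a, (t a - t b)⁻¹) = _
    rw [sub_zero]
    ring
  rw [Finset.sum_congr rfl (fun a (_ : a ∈ univ) => hsome a)] at hP
  linear_combination -hP

private lemma ratio_aux (Qa Qi ea ei : ℂ) (hQa : Qa ≠ 0) (hQi : Qi ≠ 0)
    (hea : ea ≠ 0) (hei : ei ≠ 0) :
    (Qa * ei / ea - ea / (Qa * ei)) * (Qa⁻¹ ^ 2 * ea ^ 2 - Qi⁻¹ ^ 2 * ei ^ 2)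
      = Qi⁻¹ * (Qa⁻¹ ^ 2 * ea ^ 2 - ei ^ 2) *
        (Qa * Qi⁻¹ * ei / ea - ea / (Qa * Qi⁻¹ * ei)) := by
  field_simp
  ring

private lemma coef_aux (Qa S ea c : ℂ) (hQa : Qa ≠ 0) (hS : S ≠ 0) (hea : ea ≠ 0)
    (hc : c ≠ 0) :
    (Qa - Qa⁻¹) * c⁻¹ * (Qa * S⁻¹)
      = -(S⁻¹ * c⁻¹) * ((Qa⁻¹ ^ 2 * ea ^ 2 - ea ^ 2) * (Qa⁻¹ ^ 2 * ea ^ 2)⁻¹) := by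
  field_simp
  ring

private lemma final_aux (S c : ℂ) (hS : S ≠ 0) (hc : c ≠ 0) :
    -(S⁻¹ * c⁻¹) * (1 - S ^ 2) = (S - S⁻¹) * c⁻¹ := by
  field_simp
  ring

/-- The symmetric `q`-number `[m] = (q^m - q^{-m})/(q - q^{-1})`. -/
noncomputable def qnum (q : ℂ) (m : ℕ) : ℂ :=
  (q ^ (m : ℤ) - q ^ (-(m : ℤ))) / (q - q⁻¹)

/-- For `q ≠ 0`, `q² ≠ 1`, nonzero `η_a` and nonnegative integers `α_a` with
the `q^{-2α_a}η_a²` pairwise distinct,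
`Σ_a [α_a]·∏_{i≠a} (q^{α_a}η_i/η_a - η_a/(q^{α_a}η_i))/(q^{α_a-α_i}η_i/η_a - η_a/(q^{α_a-α_i}η_i))
 = [Σ_a α_a]`, all denominators being nonzero. -/
theorem statement14 (n : ℕ) (hn : 1 ≤ n) (q : ℂ) (hq0 : q ≠ 0) (hq1 : q ^ 2 ≠ 1)
    (η : Fin n → ℂ) (hη : ∀ a, η a ≠ 0) (α : Fin n → ℕ)
    (hdist : Function.Injective fun a => q ^ (-2 * (α a : ℤ)) * η a ^ 2) :
    (∀ a i : Fin n, i ≠ a →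
      q ^ ((α a : ℤ) - (α i : ℤ)) * η i / η a -
        η a / (q ^ ((α a : ℤ) - (α i : ℤ)) * η i) ≠ 0) ∧
    ∑ a : Fin n, qnum q (α a) *
        ∏ i ∈ Finset.univ.erase a,
          (q ^ (α a) * η i / η a - η a / (q ^ (α a) * η i)) /
            (q ^ ((α a : ℤ) - (α i : ℤ)) * η i / η a -
              η a / (q ^ ((α a : ℤ) - (α i : ℤ)) * η i)) =
      qnum q (∑ a, α a) := by
  have hq2 : ∀ m : ℕ, q ^ (-2 * (m:ℤ)) = ((q ^ m)⁻¹) ^ 2 := by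
    intro m
    rw [show (-2 * (m:ℤ)) = -((2*m : ℕ) : ℤ) by push_cast; ring, zpow_neg, zpow_natCast,
      pow_mul', ← inv_pow]
  set t : Fin n → ℂ := fun a => ((q ^ (α a))⁻¹) ^ 2 * η a ^ 2 with ht
  have hdist' : Function.Injective t := by
    have h : (fun a => q ^ (-2 * (α a : ℤ)) * η a ^ 2) = t := funext fun a => by rw [hq2]
    rwa [h] at hdist
  have hQ : ∀ m : ℕ, (q:ℂ) ^ m ≠ 0 := fun m => pow_ne_zero _ hq0
  have ht0 : ∀ a, t a ≠ 0 := fun a =>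
    mul_ne_zero (pow_ne_zero _ (inv_ne_zero (hQ _))) (pow_ne_zero _ (hη a))
  have htne : ∀ a i : Fin n, i ≠ a → t i - t a ≠ 0 := fun a i h =>
    sub_ne_zero_of_ne (fun e => h (hdist' e))
  have hzpow : ∀ a i : Fin n, q ^ ((α a : ℤ) - (α i : ℤ)) = q ^ (α a) * (q ^ (α i))⁻¹ := by
    intro a i; rw [zpow_sub₀ hq0, zpow_natCast, zpow_natCast, div_eq_mul_inv]
  have part1 : ∀ a i : Fin n, i ≠ a →
      q ^ ((α a : ℤ) - (α i : ℤ)) * η i / η a -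
        η a / (q ^ ((α a : ℤ) - (α i : ℤ)) * η i) ≠ 0 := by
    intro a i hia h0
    apply htne a i hia
    rw [hzpow] at h0
    have hd : q ^ (α a) * (q ^ (α i))⁻¹ ≠ 0 := mul_ne_zero (hQ _) (inv_ne_zero (hQ _))
    have h1 := sub_eq_zero.mp h0
    rw [div_eq_div_iff (hη a) (mul_ne_zero hd (hη i))] at h1
    field_simp at h1
    show ((q ^ (α i))⁻¹)^2 * η i ^ 2 - ((q ^ (α a))⁻¹)^2 * η a ^ 2 = 0
    field_simp
    linear_combination h1
  refine ⟨part1, ?_⟩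
  have hratio : ∀ a i : Fin n, i ≠ a →
      (q ^ (α a) * η i / η a - η a / (q ^ (α a) * η i)) /
        (q ^ ((α a : ℤ) - (α i : ℤ)) * η i / η a -
          η a / (q ^ ((α a : ℤ) - (α i : ℤ)) * η i))
      = (q ^ (α i))⁻¹ * ((t a - η i ^ 2) * (t a - t i)⁻¹) := by
    intro a i hia
    have hD := part1 a i hia
    have hT : t a - t i ≠ 0 := htne i a fun h => hia h.symm
    rw [show (q ^ (α i))⁻¹ * ((t a - η i ^ 2) * (t a - t i)⁻¹)
        = ((q ^ (α i))⁻¹ * (t a - η i ^ 2)) / (t a - t i) by ring,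
      div_eq_div_iff hD hT, hzpow]
    show (q ^ (α a) * η i / η a - η a / (q ^ (α a) * η i)) *
        ((q ^ (α a))⁻¹ ^ 2 * η a ^ 2 - (q ^ (α i))⁻¹ ^ 2 * η i ^ 2)
      = (q ^ (α i))⁻¹ * ((q ^ (α a))⁻¹ ^ 2 * η a ^ 2 - η i ^ 2) *
        (q ^ (α a) * (q ^ (α i))⁻¹ * η i / η a - η a / (q ^ (α a) * (q ^ (α i))⁻¹ * η i))
    exact ratio_aux _ _ _ _ (hQ _) (hQ _) (hη a) (hη i)
  have hc : (q - q⁻¹) ≠ 0 := by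
    have h2 : q - q⁻¹ = (q ^ 2 - 1) * q⁻¹ := by field_simp
    rw [h2]
    exact mul_ne_zero (sub_ne_zero_of_ne hq1) (inv_ne_zero hq0)
  have hqnum : ∀ m : ℕ, qnum q m = (q ^ m - (q ^ m)⁻¹) * (q - q⁻¹)⁻¹ := by
    intro m
    unfold qnum
    rw [zpow_natCast, zpow_neg, zpow_natCast, div_eq_mul_inv]
  have hprodA : ∀ a : Fin n, q ^ (α a) * ∏ i ∈ univ.erase a, q ^ (α i) = q ^ (∑ b, α b) := by
    intro a
    rw [← Finset.prod_pow_eq_pow_sum (Finset.univ : Finset (Fin n)) α q]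
    exact Finset.mul_prod_erase Finset.univ (fun i => q ^ α i) (Finset.mem_univ a)
  have hterm : ∀ a : Fin n,
      qnum q (α a) * ∏ i ∈ Finset.univ.erase a,
          (q ^ (α a) * η i / η a - η a / (q ^ (α a) * η i)) /
            (q ^ ((α a : ℤ) - (α i : ℤ)) * η i / η a -
              η a / (q ^ ((α a : ℤ) - (α i : ℤ)) * η i))
        = -((q ^ (∑ b, α b))⁻¹ * (q - q⁻¹)⁻¹) *
            ((∏ i, (t a - η i ^ 2)) * (t a)⁻¹ * ∏ j ∈ univ.erase a, (t a - t j)⁻¹) := by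
    intro a
    rw [Finset.prod_congr rfl (fun i hi => hratio a i (Finset.mem_erase.mp hi).1),
      Finset.prod_mul_distrib, Finset.prod_mul_distrib, Finset.prod_inv_distrib,
      ← Finset.mul_prod_erase _ (fun i => t a - η i ^ 2) (mem_univ a)]
    have hEinv : (∏ i ∈ univ.erase a, (q:ℂ) ^ (α i))⁻¹
        = q ^ (α a) * (q ^ (∑ b, α b))⁻¹ := by
      rw [← hprodA a, mul_inv, ← mul_assoc, mul_inv_cancel₀ (hQ _), one_mul]
    have hcoef : qnum q (α a) * (∏ i ∈ univ.erase a, q ^ (α i))⁻¹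
        = -((q ^ (∑ b, α b))⁻¹ * (q - q⁻¹)⁻¹) * ((t a - η a ^ 2) * (t a)⁻¹) := by
      rw [hqnum, hEinv]
      show (q ^ (α a) - (q ^ (α a))⁻¹) * (q - q⁻¹)⁻¹ * (q ^ (α a) * (q ^ (∑ b, α b))⁻¹)
        = -((q ^ (∑ b, α b))⁻¹ * (q - q⁻¹)⁻¹) *
            (((q ^ (α a))⁻¹ ^ 2 * η a ^ 2 - η a ^ 2) * (((q ^ (α a))⁻¹ ^ 2 * η a ^ 2))⁻¹)
      exact coef_aux _ _ _ _ (hQ _) (hQ _) (hη a) hc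
    linear_combination
      ((∏ i ∈ univ.erase a, (t a - η i ^ 2)) * ∏ j ∈ univ.erase a, (t a - t j)⁻¹) * hcoef
  have hsum := key n t (fun i => η i ^ 2) ht0 hdist'
  have hzt : ∏ i, (η i ^ 2) * (t i)⁻¹ = (q ^ (∑ b, α b))^2 := by
    calc ∏ i, η i ^ 2 * (t i)⁻¹ = ∏ i, ((q ^ (α i))^2) := by
          refine Finset.prod_congr rfl fun i _ => ?_
          show η i ^ 2 * (((q ^ (α i))⁻¹) ^ 2 * η i ^ 2)⁻¹ = _
          field_simp
          exact div_self (hη i)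
      _ = (∏ i, q ^ (α i))^2 := by rw [Finset.prod_pow]
      _ = _ := by rw [Finset.prod_pow_eq_pow_sum]
  rw [Finset.sum_congr rfl (fun a (_ : a ∈ univ) => hterm a), ← Finset.mul_sum, hsum, hzt,
    hqnum]
  exact final_aux _ _ (hQ _) hc

end SG14
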